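/- Let 0 → ℤ^{n-d} →^B ℤ^n →^A ℤ^d → 0 be exact with A surjective. Then the invariant ring ℂ[z_1,…,z_n,w_1,…,w_n]^{T^d}, where the torus T^d = (ℂ*)^d acts by t·z_j = t^{a_j} z_j, t·w_j = t^{-a_j} w_j, equals the subalgebra generated by z_1w_1, …, z_nw_n together with the monomials f_β := ∏_{i: β_i > 0} z_i^{β_i} ∏_{i: β_i < 0} w_i^{-β_i} for β ∈ Image(B). -/

import Mathlib

open MvPolynomial

/-- The scaling action of the torus `T^d = (ℂ*)^d` on the variables of `ℂ[z, w]`: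
`t · z_j = t^{a_j} z_j` and `t · w_j = t^{-a_j} w_j`. -/
noncomputable def scaleVars (d n : ℕ) (A : Matrix (Fin d) (Fin n) ℤ) (t : Fin d → ℂˣ) :
    Fin n ⊕ Fin n → MvPolynomial (Fin n ⊕ Fin n) ℂ
  | Sum.inl j => C (∏ i : Fin d, ((t i : ℂ) ^ (A i j))) * X (Sum.inl j)
  | Sum.inr j => C (∏ i : Fin d, ((t i : ℂ) ^ (-(A i j)))) * X (Sum.inr j)

/-- The monomial `f_β = ∏_{β_i > 0} z_i^{β_i} ∏_{β_i < 0} w_i^{-β_i}`. -/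
noncomputable def fBeta (n : ℕ) (β : Fin n → ℤ) : MvPolynomial (Fin n ⊕ Fin n) ℂ :=
  ∏ i : Fin n, X (Sum.inl i) ^ (β i).toNat * X (Sum.inr i) ^ (-(β i)).toNat

namespace Stmt7Aux

lemma zpow_sum₀ {α : Type*} {x : ℂ} (hx : x ≠ 0) (s : Finset α) (f : α → ℤ) :
    x ^ (∑ a ∈ s, f a) = ∏ a ∈ s, x ^ f a := by
  induction s using Finset.cons_induction with
  | empty => simp
  | cons a s ha ih => rw [Finset.sum_cons, Finset.prod_cons, zpow_add₀ hx, ih]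

lemma zpow_pow₀ {x : ℂ} (hx : x ≠ 0) (a : ℤ) (k : ℕ) : (x ^ a) ^ k = x ^ (a * k) := by
  induction k with
  | zero => simp
  | succ k ih =>
    rw [pow_succ, ih, ← zpow_add₀ hx]
    congr 1
    push_cast
    ring

/-- The exponent vector `u - v` of a monomial `z^u w^v`. -/
def uv {n : ℕ} (σ : (Fin n ⊕ Fin n) →₀ ℕ) : Fin n → ℤ :=
  fun j => (σ (Sum.inl j) : ℤ) - (σ (Sum.inr j) : ℤ)

lemma scalar_eq {d n : ℕ} (A : Matrix (Fin d) (Fin n) ℤ) (t : Fin d → ℂˣ)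
    (σ : (Fin n ⊕ Fin n) →₀ ℕ) :
    (∏ j : Fin n, (∏ i : Fin d, ((t i : ℂ) ^ (A i j))) ^ σ (Sum.inl j)) *
      ∏ j : Fin n, (∏ i : Fin d, ((t i : ℂ) ^ (-(A i j)))) ^ σ (Sum.inr j)
      = ∏ i : Fin d, (t i : ℂ) ^ (A.mulVec (uv σ) i) := by
  have hne : ∀ i, (t i : ℂ) ≠ 0 := fun i => (t i).ne_zero
  have key : ∀ j : Fin n,
      (∏ i : Fin d, ((t i : ℂ) ^ (A i j))) ^ σ (Sum.inl j) *
        (∏ i : Fin d, ((t i : ℂ) ^ (-(A i j)))) ^ σ (Sum.inr j)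
        = ∏ i : Fin d,
            (t i : ℂ) ^ (A i j * (σ (Sum.inl j) : ℤ) + (-(A i j)) * (σ (Sum.inr j) : ℤ)) := by
    intro j
    rw [← Finset.prod_pow, ← Finset.prod_pow, ← Finset.prod_mul_distrib]
    refine Finset.prod_congr rfl fun i _ => ?_
    rw [zpow_pow₀ (hne i), zpow_pow₀ (hne i), ← zpow_add₀ (hne i)]
  rw [← Finset.prod_mul_distrib]
  simp only [key]
  rw [Finset.prod_comm]
  refine Finset.prod_congr rfl fun i _ => ?_
  rw [← zpow_sum₀ (hne i)]
  congr 1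
  simp only [Matrix.mulVec, dotProduct, uv]
  exact Finset.sum_congr rfl fun j _ => by ring

lemma aeval_monomial_scale {d n : ℕ} (A : Matrix (Fin d) (Fin n) ℤ) (t : Fin d → ℂˣ)
    (σ : (Fin n ⊕ Fin n) →₀ ℕ) (c : ℂ) :
    aeval (scaleVars d n A t) (monomial σ c)
      = monomial σ (c * ∏ i : Fin d, (t i : ℂ) ^ (A.mulVec (uv σ) i)) := by
  rw [aeval_monomial, Finsupp.prod_fintype _ _ (fun _ => pow_zero _), Fintype.prod_sum_type]
  simp only [scaleVars, mul_pow, ← C_pow]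
  rw [Finset.prod_mul_distrib, Finset.prod_mul_distrib,
    ← map_prod (C : ℂ →+* MvPolynomial (Fin n ⊕ Fin n) ℂ) _ Finset.univ,
    ← map_prod (C : ℂ →+* MvPolynomial (Fin n ⊕ Fin n) ℂ) _ Finset.univ]
  rw [monomial_eq, Finsupp.prod_fintype _ _ (fun _ => pow_zero _), Fintype.prod_sum_type,
    ← scalar_eq A t σ]
  rw [map_mul C, map_mul C]
  simp only [algebraMap_eq]
  ring

lemma coeff_aeval {d n : ℕ} (A : Matrix (Fin d) (Fin n) ℤ) (t : Fin d → ℂˣ)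
    (p : MvPolynomial (Fin n ⊕ Fin n) ℂ) (σ : (Fin n ⊕ Fin n) →₀ ℕ) :
    coeff σ (aeval (scaleVars d n A t) p)
      = coeff σ p * ∏ i : Fin d, (t i : ℂ) ^ (A.mulVec (uv σ) i) := by
  conv_lhs => rw [← support_sum_monomial_coeff p]
  rw [map_sum]
  simp only [aeval_monomial_scale]
  rw [coeff_sum]
  simp only [coeff_monomial]
  rw [Finset.sum_ite_eq' p.support σ]
  split_ifs with h
  · rfl
  · rw [notMem_support_iff.mp h, zero_mul]

lemma exps_zero {d : ℕ} {e : Fin d → ℤ}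
    (h : ∀ t : Fin d → ℂˣ, ∏ i : Fin d, (t i : ℂ) ^ (e i) = 1) : ∀ i, e i = 0 := by
  intro i
  have h2 := h (fun i' => if i' = i then Units.mk0 2 two_ne_zero else 1)
  have h3 : (2 : ℂ) ^ (e i) = 1 := by
    rw [Finset.prod_eq_single i (fun j _ hj => by simp [hj]) (by simp)] at h2
    simpa using h2
  have habs : (2 : ℝ) ^ (e i) = 1 := by
    have := congrArg (‖·‖) h3
    rwa [Complex.norm_zpow, Complex.norm_two, norm_one] at this
  have : (2 : ℝ) ^ (e i) = (2 : ℝ) ^ (0 : ℤ) := by simpa using habs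
  exact zpow_right_injective₀ (by norm_num : (0:ℝ) < 2) (by norm_num) this

/-- Product form of a monomial. -/
noncomputable def prodZW {n : ℕ} (u v : Fin n → ℕ) : MvPolynomial (Fin n ⊕ Fin n) ℂ :=
  ∏ i : Fin n, X (Sum.inl i) ^ u i * X (Sum.inr i) ^ v i

lemma monomial_one_eq {n : ℕ} (σ : (Fin n ⊕ Fin n) →₀ ℕ) :
    monomial σ (1 : ℂ) = prodZW (fun j => σ (Sum.inl j)) (fun j => σ (Sum.inr j)) := by
  rw [monomial_eq, C_1, one_mul, Finsupp.prod_fintype _ _ (fun _ => pow_zero _),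
    Fintype.prod_sum_type, ← Finset.prod_mul_distrib]
  rfl

lemma fBeta_eq {n : ℕ} (β : Fin n → ℤ) :
    fBeta n β = prodZW (fun i => (β i).toNat) (fun i => (-(β i)).toNat) := rfl

/-- The Finsupp exponent of `fBeta`. -/
noncomputable def sigmaOf {n : ℕ} (β : Fin n → ℤ) : (Fin n ⊕ Fin n) →₀ ℕ :=
  Finsupp.equivFunOnFinite.symm
    (Sum.elim (fun i => (β i).toNat) fun i => (-(β i)).toNat)

lemma fBeta_monomial {n : ℕ} (β : Fin n → ℤ) : fBeta n β = monomial (sigmaOf β) 1 := by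
  rw [fBeta_eq, monomial_one_eq]
  congr 1 <;> funext i <;> simp [sigmaOf]

lemma uv_sigmaOf {n : ℕ} (β : Fin n → ℤ) : uv (sigmaOf β) = β := by
  funext i
  simp only [uv, sigmaOf, Finsupp.coe_equivFunOnFinite_symm, Sum.elim_inl, Sum.elim_inr]
  omega

lemma split {n : ℕ} (σ : (Fin n ⊕ Fin n) →₀ ℕ) :
    monomial σ (1 : ℂ)
      = (∏ i : Fin n,
          (X (Sum.inl i) * X (Sum.inr i)) ^ min (σ (Sum.inl i)) (σ (Sum.inr i))) *
        fBeta n (uv σ) := by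
  rw [monomial_one_eq, fBeta_eq, prodZW, prodZW, ← Finset.prod_mul_distrib]
  refine Finset.prod_congr rfl fun i _ => ?_
  have h1 : σ (Sum.inl i) = min (σ (Sum.inl i)) (σ (Sum.inr i)) + (uv σ i).toNat := by
    simp only [uv]; omega
  have h2 : σ (Sum.inr i) = min (σ (Sum.inl i)) (σ (Sum.inr i)) + (-(uv σ i)).toNat := by
    simp only [uv]; omega
  symm
  rw [mul_pow]
  have key : (X (Sum.inl i) : MvPolynomial (Fin n ⊕ Fin n) ℂ) ^ min (σ (Sum.inl i)) (σ (Sum.inr i)) *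
      X (Sum.inr i) ^ min (σ (Sum.inl i)) (σ (Sum.inr i)) *
      (X (Sum.inl i) ^ (uv σ i).toNat * X (Sum.inr i) ^ (-(uv σ i)).toNat)
      = X (Sum.inl i) ^ (min (σ (Sum.inl i)) (σ (Sum.inr i)) + (uv σ i).toNat) *
        X (Sum.inr i) ^ (min (σ (Sum.inl i)) (σ (Sum.inr i)) + (-(uv σ i)).toNat) := by
    rw [pow_add, pow_add]
    ring
  rw [key, ← h1, ← h2]

end Stmt7Aux

open Stmt7Aux in
/-- The invariant ring `ℂ[z,w]^{T^d}` equals the subalgebra generated by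
`z_1 w_1, …, z_n w_n` together with the monomials `f_β` for `β ∈ Image B`. -/
theorem stmt_7 (d n : ℕ) (A : Matrix (Fin d) (Fin n) ℤ) (B : Matrix (Fin n) (Fin (n - d)) ℤ)
    (hA : Function.Surjective A.mulVec)
    (hB : Function.Injective B.mulVec)
    (hexact : Set.range B.mulVec = {v | A.mulVec v = 0}) :
    {p : MvPolynomial (Fin n ⊕ Fin n) ℂ | ∀ t : Fin d → ℂˣ, aeval (scaleVars d n A t) p = p}
      = ↑(Algebra.adjoin ℂ
          ((Set.range fun i : Fin n =>
              (X (Sum.inl i) * X (Sum.inr i) : MvPolynomial (Fin n ⊕ Fin n) ℂ)) ∪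
            ((fun β => fBeta n β) '' Set.range B.mulVec))) := by
  apply Set.eq_of_subset_of_subset
  · -- invariants ⊆ adjoin
    intro p hp
    simp only [Set.mem_setOf_eq] at hp
    simp only [SetLike.mem_coe]
    have hsupp : ∀ σ ∈ p.support, A.mulVec (uv σ) = 0 := by
      intro σ hσ
      have hc : coeff σ p ≠ 0 := mem_support_iff.mp hσ
      have h1 : ∀ t : Fin d → ℂˣ, ∏ i : Fin d, (t i : ℂ) ^ (A.mulVec (uv σ) i) = 1 := by
        intro t
        have h := coeff_aeval A t p σ
        rw [hp t] at h
        exact (mul_left_cancel₀ hc (by rw [← h, mul_one])).symm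
      funext i
      exact exps_zero h1 i
    rw [← support_sum_monomial_coeff p]
    refine Subalgebra.sum_mem _ fun σ hσ => ?_
    have hβ : uv σ ∈ Set.range B.mulVec := by rw [hexact]; exact hsupp σ hσ
    have hmono : (monomial σ) (coeff σ p) = C (coeff σ p) * monomial σ 1 := by
      rw [C_mul_monomial, mul_one]
    rw [hmono, split σ]
    refine mul_mem ?_ (mul_mem ?_ ?_)
    · exact Subalgebra.algebraMap_mem _ (coeff σ p)
    · refine Subalgebra.prod_mem _ fun i _ => pow_mem ?_ _
      exact Algebra.subset_adjoin (Set.mem_union_left _ ⟨i, rfl⟩)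
    · exact Algebra.subset_adjoin (Set.mem_union_right _ ⟨uv σ, hβ, rfl⟩)
  · -- adjoin ⊆ invariants
    have hle : Algebra.adjoin ℂ
        ((Set.range fun i : Fin n =>
            (X (Sum.inl i) * X (Sum.inr i) : MvPolynomial (Fin n ⊕ Fin n) ℂ)) ∪
          ((fun β => fBeta n β) '' Set.range B.mulVec))
        ≤ ⨅ t : Fin d → ℂˣ,
            AlgHom.equalizer (aeval (scaleVars d n A t))
              (AlgHom.id ℂ (MvPolynomial (Fin n ⊕ Fin n) ℂ)) := by
      refine Algebra.adjoin_le fun x hx => Algebra.mem_iInf.mpr fun t => ?_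
      show aeval (scaleVars d n A t) x = AlgHom.id ℂ _ x
      rw [AlgHom.id_apply]
      rcases hx with ⟨i, rfl⟩ | ⟨β, hβ, rfl⟩
      · -- z_i w_i is invariant
        have hab : (∏ k : Fin d, (t k : ℂ) ^ (A k i)) *
            (∏ k : Fin d, (t k : ℂ) ^ (-(A k i))) = 1 := by
          rw [← Finset.prod_mul_distrib]
          refine Finset.prod_eq_one fun k _ => ?_
          rw [zpow_neg, mul_inv_cancel₀ (zpow_ne_zero _ (t k).ne_zero)]
        rw [map_mul, aeval_X, aeval_X]
        show (C (∏ k : Fin d, (t k : ℂ) ^ (A k i)) * X (Sum.inl i)) *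
            (C (∏ k : Fin d, (t k : ℂ) ^ (-(A k i))) * X (Sum.inr i))
            = X (Sum.inl i) * X (Sum.inr i)
        calc (C (∏ k : Fin d, (t k : ℂ) ^ (A k i)) * X (Sum.inl i)) *
            (C (∏ k : Fin d, (t k : ℂ) ^ (-(A k i))) * X (Sum.inr i))
            = C ((∏ k : Fin d, (t k : ℂ) ^ (A k i)) *
                (∏ k : Fin d, (t k : ℂ) ^ (-(A k i)))) * (X (Sum.inl i) * X (Sum.inr i)) := by
              rw [map_mul]; ring
          _ = X (Sum.inl i) * X (Sum.inr i) := by rw [hab, map_one, one_mul]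
      · -- fBeta β is invariant for β ∈ range B
        have hβ0 : A.mulVec β = 0 := by
          have h' := hβ
          rw [hexact] at h'
          exact h'
        show aeval (scaleVars d n A t) (fBeta n β) = fBeta n β
        rw [fBeta_monomial, aeval_monomial_scale, uv_sigmaOf, hβ0]
        simp
    intro p hp
    simp only [SetLike.mem_coe] at hp
    simp only [Set.mem_setOf_eq]
    intro t
    have := Algebra.mem_iInf.mp (hle hp) t
    simpa using this
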